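/- arXiv:0710.4583 — 4 statements merged into one kernel-verified Lean document; each statement's English description precedes it below -/
import Mathlib

section
/- If x : ℝ → ℝ³ is a differentiable solution of the Rabinovich system, then the function h₃(x(t)) = x₁(t)² − x₃(t)² is constant in t. -/
/-- If (x₁,x₂,x₃) is a differentiable solution of the Rabinovich system
ẋ₁ = x₂x₃, ẋ₂ = −x₁x₃, ẋ₃ = x₁x₂, then h₃(x(t)) = x₁(t)² − x₃(t)² is
constant in t. -/
theorem rabinovich_h3_conserved (x₁ x₂ x₃ : ℝ → ℝ)
    (hx₁ : ∀ t, HasDerivAt x₁ (x₂ t * x₃ t) t)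
    (hx₂ : ∀ t, HasDerivAt x₂ (-(x₁ t * x₃ t)) t)
    (hx₃ : ∀ t, HasDerivAt x₃ (x₁ t * x₂ t) t) :
    ∀ t s : ℝ, x₁ t ^ 2 - x₃ t ^ 2 = x₁ s ^ 2 - x₃ s ^ 2 := by
  have key : ∀ t, HasDerivAt (fun t => x₁ t ^ 2 - x₃ t ^ 2) 0 t := by
    intro t
    have h := ((hx₁ t).pow 2).sub ((hx₃ t).pow 2)
    refine HasDerivAt.congr_deriv (f := fun t => x₁ t ^ 2 - x₃ t ^ 2) h ?_
    ring
  intro t s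
  exact is_const_of_deriv_eq_zero (fun u => (key u).differentiableAt)
    (fun u => (key u).deriv) t s
end

section
/- The Rabinovich system admits the Hamilton–Poisson realizations (ℝ³, P¹, h₁), (ℝ³, P², h₂) and (ℝ³, P³, h₃): for every x ∈ ℝ³ one has P¹(x)·∇h₁(x) = P²(x)·∇h₂(x) = P³(x)·∇h₃(x) = X(x), where X is the Rabinovich vector field. -/
open Matrix

/-- The Rabinovich vector field X(x₁,x₂,x₃) = (x₂x₃, −x₁x₃, x₁x₂). -/
def rabinovichField (x : Fin 3 → ℝ) : Fin 3 → ℝ :=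
  ![x 1 * x 2, -(x 0 * x 2), x 0 * x 1]

/-- The gradient of a function on ℝ³. -/
noncomputable def grad (f : (Fin 3 → ℝ) → ℝ) (x : Fin 3 → ℝ) : Fin 3 → ℝ :=
  fun j => fderiv ℝ f x (Pi.single j 1)

/-- The Poisson matrix P¹. -/
def P1 (x : Fin 3 → ℝ) : Matrix (Fin 3) (Fin 3) ℝ :=
  !![0, x 2, -(x 1); -(x 2), 0, 0; x 1, 0, 0]

/-- The Poisson matrix P². -/
noncomputable def P2 (x : Fin 3 → ℝ) : Matrix (Fin 3) (Fin 3) ℝ :=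
  !![0, 0, x 1 / 2; 0, 0, -(x 0) / 2; -(x 1) / 2, x 0 / 2, 0]

/-- The Poisson matrix P³. -/
noncomputable def P3 (x : Fin 3 → ℝ) : Matrix (Fin 3) (Fin 3) ℝ :=
  !![0, 0, -(x 1) / 2; 0, 0, x 0 / 2; x 1 / 2, -(x 0) / 2, 0]

/-- h₁(x) = (x₁² + x₂²)/2. -/
noncomputable def h1 (x : Fin 3 → ℝ) : ℝ := (x 0 ^ 2 + x 1 ^ 2) / 2

/-- h₂(x) = x₂² + x₃². -/
def h2 (x : Fin 3 → ℝ) : ℝ := x 1 ^ 2 + x 2 ^ 2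

/-- h₃(x) = x₁² − x₃². -/
def h3 (x : Fin 3 → ℝ) : ℝ := x 0 ^ 2 - x 2 ^ 2


lemma hasF_sq (i : Fin 3) (x : Fin 3 → ℝ) :
    HasFDerivAt (fun x : Fin 3 → ℝ => x i ^ 2)
      (((2 * x i) • ContinuousLinearMap.proj i : (Fin 3 → ℝ) →L[ℝ] ℝ)) x := by
  have := ((ContinuousLinearMap.proj (R := ℝ) (φ := fun _ : Fin 3 => ℝ) i).hasFDerivAt
      (x := x)).mul
    ((ContinuousLinearMap.proj (R := ℝ) (φ := fun _ : Fin 3 => ℝ) i).hasFDerivAt (x := x))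
  simpa [pow_two, two_mul, add_smul, smul_smul, Pi.mul_def] using this

lemma grad_h1 (x : Fin 3 → ℝ) : grad h1 x = ![x 0, x 1, 0] := by
  have h : HasFDerivAt h1 ((1/2 : ℝ) • (((2 * x 0) • ContinuousLinearMap.proj 0 +
      (2 * x 1) • ContinuousLinearMap.proj 1) : (Fin 3 → ℝ) →L[ℝ] ℝ)) x := by
    have := ((hasF_sq 0 x).add (hasF_sq 1 x)).const_smul (1/2 : ℝ)
    have e : h1 = fun y : Fin 3 → ℝ => (1/2:ℝ) • (y 0 ^ 2 + y 1 ^ 2) := by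
      funext y; simp [h1, smul_eq_mul]; ring
    rw [e]; exact this
  funext j
  rw [grad, h.fderiv]
  fin_cases j <;> simp [Pi.single_apply] <;> ring

lemma grad_h2 (x : Fin 3 → ℝ) : grad h2 x = ![0, 2 * x 1, 2 * x 2] := by
  have h : HasFDerivAt h2 (((2 * x 1) • ContinuousLinearMap.proj 1 +
      (2 * x 2) • ContinuousLinearMap.proj 2 : (Fin 3 → ℝ) →L[ℝ] ℝ)) x :=
    (hasF_sq 1 x).add (hasF_sq 2 x)
  funext j
  rw [grad, h.fderiv]
  fin_cases j <;> simp [Pi.single_apply]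

lemma grad_h3 (x : Fin 3 → ℝ) : grad h3 x = ![2 * x 0, 0, -(2 * x 2)] := by
  have h : HasFDerivAt h3 (((2 * x 0) • ContinuousLinearMap.proj 0 -
      (2 * x 2) • ContinuousLinearMap.proj 2 : (Fin 3 → ℝ) →L[ℝ] ℝ)) x :=
    (hasF_sq 0 x).sub (hasF_sq 2 x)
  funext j
  rw [grad, h.fderiv]
  fin_cases j <;> simp [Pi.single_apply]

/-- The Rabinovich system admits the Hamilton–Poisson realizations
(ℝ³, P¹, h₁), (ℝ³, P², h₂) and (ℝ³, P³, h₃). -/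
theorem rabinovich_hamilton_poisson_realizations (x : Fin 3 → ℝ) :
    (P1 x).mulVec (grad h1 x) = rabinovichField x ∧
    (P2 x).mulVec (grad h2 x) = rabinovichField x ∧
    (P3 x).mulVec (grad h3 x) = rabinovichField x := by
  refine ⟨?_, ?_, ?_⟩ <;> funext i <;>
    [skip; skip; skip] <;>
    simp only [grad_h1, grad_h2, grad_h3] <;>
    fin_cases i <;>
    simp [P1, P2, P3, rabinovichField, Matrix.mulVec, dotProduct,
      Fin.sum_univ_three] <;> ring
end

section
/- For every m ∈ ℝ with m ≠ 0, the Jacobian matrix of the Rabinovich vector field at the equilibrium e2^m = (0,m,0) has a real eigenvalue equal to |m| > 0; consequently the equilibrium (0,m,0) is unstable. -/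
open Matrix

/-- The Jacobian matrix of a vector field on ℝ³ at a point. -/
noncomputable def jacobian (F : (Fin 3 → ℝ) → (Fin 3 → ℝ)) (p : Fin 3 → ℝ) :
    Matrix (Fin 3) (Fin 3) ℝ :=
  Matrix.of fun i j => fderiv ℝ (fun x => F x i) p (Pi.single j 1)

/-- x : ℝ → ℝ³ is a solution of the differential system associated to a
vector field F. -/
def IsSolution (F : (Fin 3 → ℝ) → (Fin 3 → ℝ)) (x : ℝ → Fin 3 → ℝ) : Prop :=
  ∀ t : ℝ, ∀ i : Fin 3, HasDerivAt (fun s => x s i) (F (x t) i) t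

/-- An equilibrium e of the system given by F is (Lyapunov) unstable: there is
ε > 0 such that for every δ > 0 some solution starting within δ of e leaves
the ε-ball around e at some positive time. -/
def Unstable (F : (Fin 3 → ℝ) → (Fin 3 → ℝ)) (e : Fin 3 → ℝ) : Prop :=
  ∃ ε > (0 : ℝ), ∀ δ > (0 : ℝ), ∃ x : ℝ → Fin 3 → ℝ,
    IsSolution F x ∧ ‖x 0 - e‖ < δ ∧ ∃ t > (0 : ℝ), ε ≤ ‖x t - e‖

lemma fderiv_mul_coord (a b : Fin 3) (p w : Fin 3 → ℝ) :
    fderiv ℝ (fun x : Fin 3 → ℝ => x a * x b) p w = p a * w b + p b * w a := by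
  have ha := hasFDerivAt_apply (𝕜 := ℝ) a p
  have hb := hasFDerivAt_apply (𝕜 := ℝ) b p
  rw [show (fun x : Fin 3 → ℝ => x a * x b) = (fun f => f a) * (fun f => f b) from rfl,
    (ha.mul hb).fderiv]
  simp [smul_eq_mul, mul_comm]

lemma jac_eigen (m : ℝ) :
    (jacobian rabinovichField ![0, m, 0]).mulVec ![|m|, 0, m] = |m| • ![|m|, 0, m] := by
  have h0 : (fun x : Fin 3 → ℝ => rabinovichField x 0) = fun x => x 1 * x 2 := by
    funext x; simp [rabinovichField]
  have h1 : (fun x : Fin 3 → ℝ => rabinovichField x 1) = fun x => -(x 0 * x 2) := by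
    funext x; simp [rabinovichField]
  have h2 : (fun x : Fin 3 → ℝ => rabinovichField x 2) = fun x => x 0 * x 1 := by
    funext x; simp [rabinovichField]
  funext i
  fin_cases i <;>
    simp [jacobian, mulVec, dotProduct, Fin.sum_univ_three, h0, h1, h2,
      fderiv_neg, fderiv_mul_coord, Pi.single_apply] <;>
    first
      | ring
      | (rw [← abs_mul_abs_self m]; ring)

/-- A heteroclinic solution of the Rabinovich system. -/
noncomputable def rabSol (m c : ℝ) (t : ℝ) : Fin 3 → ℝ :=
  ![m * (Real.cosh (|m| * t + c))⁻¹,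
    -(m * Real.sinh (|m| * t + c)) * (Real.cosh (|m| * t + c))⁻¹,
    |m| * (Real.cosh (|m| * t + c))⁻¹]

lemma rabSol_isSolution (m c : ℝ) : IsSolution rabinovichField (rabSol m c) := by
  intro t i
  set θ : ℝ := |m| * t + c with hθdef
  have hθ : HasDerivAt (fun s : ℝ => |m| * s + c) |m| t := by
    simpa using ((hasDerivAt_id t).const_mul |m|).add_const c
  have hc : HasDerivAt (fun s : ℝ => Real.cosh (|m| * s + c)) (Real.sinh θ * |m|) t :=
    by have := (Real.hasDerivAt_cosh θ).comp t hθ; exact this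
  have hs : HasDerivAt (fun s : ℝ => Real.sinh (|m| * s + c)) (Real.cosh θ * |m|) t :=
    by have := (Real.hasDerivAt_sinh θ).comp t hθ; exact this
  have hcpos : (0 : ℝ) < Real.cosh θ := Real.cosh_pos θ
  have hinv : HasDerivAt (fun s : ℝ => (Real.cosh (|m| * s + c))⁻¹)
      (-(Real.sinh θ * |m|) / Real.cosh θ ^ 2) t := hc.inv hcpos.ne'
  have hid : Real.cosh θ ^ 2 - Real.sinh θ ^ 2 = 1 := Real.cosh_sq_sub_sinh_sq θ
  have habs : |m| * |m| = m * m := abs_mul_abs_self m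
  fin_cases i
  · have := hinv.const_mul m
    simp [rabinovichField, rabSol]
    refine this.congr_deriv ?_
    field_simp
    ring
  · have := ((hs.const_mul m).mul hinv).neg
    simp [rabinovichField, rabSol]
    refine this.congr_deriv ?_
    field_simp
    simp only [← hθdef]
    linear_combination (-(m * |m| * Real.cosh θ ^ 2)) * hid
  · have := hinv.const_mul |m|
    simp [rabinovichField, rabSol]
    refine this.congr_deriv ?_
    field_simp
    simp only [← hθdef]
    linear_combination (-(Real.sinh θ * Real.cosh θ ^ 2)) * habs

/-- For m ≠ 0, the Jacobian of the Rabinovich vector field at the equilibrium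
(0,m,0) has a real eigenvalue |m| > 0; consequently (0,m,0) is unstable. -/
theorem rabinovich_e2_unstable (m : ℝ) (hm : m ≠ 0) :
    (0 < |m| ∧ ∃ v : Fin 3 → ℝ, v ≠ 0 ∧
      (jacobian rabinovichField ![0, m, 0]).mulVec v = |m| • v) ∧
    Unstable rabinovichField ![0, m, 0] := by
  have hmpos : (0 : ℝ) < |m| := abs_pos.mpr hm
  constructor
  · refine ⟨hmpos, ![|m|, 0, m], ?_, jac_eigen m⟩
    intro h
    have := congrFun h 0
    simp at this
    exact hm this
  · refine ⟨|m|, hmpos, ?_⟩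
    intro δ hδ
    -- choose the shift c very negative
    set c : ℝ := min (Real.log (δ / (2 * |m| + 1))) (-1) with hcdef
    have hcneg : c < 0 := lt_of_le_of_lt (min_le_right _ _) (by norm_num)
    have hexpc : Real.exp c ≤ δ / (2 * |m| + 1) := by
      calc Real.exp c ≤ Real.exp (Real.log (δ / (2 * |m| + 1))) :=
            Real.exp_le_exp.mpr (min_le_left _ _)
        _ = δ / (2 * |m| + 1) := Real.exp_log (by positivity)
    have hexp1 : Real.exp c ≤ 1 := Real.exp_le_one_iff.mpr hcneg.le
    have hbound : 2 * |m| * Real.exp c < δ := by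
      have hd : (0:ℝ) < 2 * |m| + 1 := by positivity
      have h1 : 2 * |m| * Real.exp c ≤ 2 * |m| * (δ / (2 * |m| + 1)) := by
        have h2m : (0:ℝ) ≤ 2 * |m| := by positivity
        exact mul_le_mul_of_nonneg_left hexpc h2m
      have h2 : 2 * |m| * (δ / (2 * |m| + 1)) < δ := by
        rw [← mul_div_assoc, div_lt_iff₀ hd]
        nlinarith
      exact lt_of_le_of_lt h1 h2
    -- the solution
    refine ⟨rabSol m c, rabSol_isSolution m c, ?_, ?_⟩
    · -- starts close to the equilibrium
      have hcosh_inv : (Real.cosh c)⁻¹ ≤ 2 * Real.exp c := by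
        rw [Real.cosh_eq]
        rw [inv_le_iff_one_le_mul₀ (by positivity)]
        have h1 : (0:ℝ) < Real.exp c := Real.exp_pos c
        have h2 : (0:ℝ) < Real.exp (-c) := Real.exp_pos _
        have h3 : Real.exp c * Real.exp (-c) = 1 := by
          rw [← Real.exp_add]; simp
        nlinarith
      rw [pi_norm_lt_iff hδ]
      intro i
      have hcpos : (0:ℝ) < Real.cosh c := Real.cosh_pos c
      have hb0 : |m| * (Real.cosh c)⁻¹ < δ :=
        lt_of_le_of_lt (by nlinarith [abs_nonneg m, Real.exp_pos c] :
          |m| * (Real.cosh c)⁻¹ ≤ 2 * |m| * Real.exp c) hbound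
      fin_cases i
      · show ‖(rabSol m c 0 - ![0, m, 0]) (0 : Fin 3)‖ < δ
        have hv : (rabSol m c 0 - ![0, m, 0]) 0 = m * (Real.cosh c)⁻¹ := by
          simp [rabSol]
        rw [hv, Real.norm_eq_abs, abs_mul, abs_of_pos (inv_pos.mpr hcpos)]
        exact hb0
      · show ‖(rabSol m c 0 - ![0, m, 0]) (1 : Fin 3)‖ < δ
        have hv : (rabSol m c 0 - ![0, m, 0]) 1 = -(m * Real.exp c) * (Real.cosh c)⁻¹ := by
          have hcs : Real.cosh c + Real.sinh c = Real.exp c := Real.cosh_add_sinh c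
          simp [rabSol]
          field_simp
          linear_combination (-1 : ℝ) * hcs
        rw [hv, Real.norm_eq_abs, abs_mul, abs_neg, abs_mul,
          abs_of_pos (Real.exp_pos c), abs_of_pos (inv_pos.mpr hcpos)]
        calc |m| * Real.exp c * (Real.cosh c)⁻¹
            = Real.exp c * (|m| * (Real.cosh c)⁻¹) := by ring
          _ ≤ 1 * (|m| * (Real.cosh c)⁻¹) := by
              apply mul_le_mul_of_nonneg_right hexp1
              positivity
          _ = |m| * (Real.cosh c)⁻¹ := by ring
          _ < δ := hb0
      · show ‖(rabSol m c 0 - ![0, m, 0]) (2 : Fin 3)‖ < δ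
        have hv : (rabSol m c 0 - ![0, m, 0]) 2 = |m| * (Real.cosh c)⁻¹ := by
          simp [rabSol]
        rw [hv, Real.norm_eq_abs, abs_mul, abs_abs, abs_of_pos (inv_pos.mpr hcpos)]
        exact hb0
    · -- escapes at time t₀ = -c/|m|
      refine ⟨-c / |m|, div_pos (by linarith) hmpos, ?_⟩
      have hθ0 : |m| * (-c / |m|) + c = 0 := by
        field_simp
        ring
      have h1 : (rabSol m c (-c / |m|) - ![0, m, 0]) 1 = -m := by
        simp only [rabSol, Pi.sub_apply, hθ0]
        simp
      calc |m| = ‖(rabSol m c (-c / |m|) - ![0, m, 0]) 1‖ := by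
            rw [h1]; simp
        _ ≤ ‖rabSol m c (-c / |m|) - ![0, m, 0]‖ := norm_le_pi_norm _ 1
end

section
/- The planes x₃ = x₁ and x₃ = −x₁ are invariant for the Rabinovich system: if x : ℝ → ℝ³ is a differentiable solution with x₃(0) = x₁(0), then x₃(t) = x₁(t) for all t; and if x₃(0) = −x₁(0), then x₃(t) = −x₁(t) for all t. -/
/-- If `y' = -(c t) * y` with `c` continuous and `y 0 = 0`, then `y ≡ 0`. -/
lemma linear_ode_zero (y c : ℝ → ℝ) (hc : Continuous c)
    (hy : ∀ t, HasDerivAt y (-(c t) * y t) t) (h0 : y 0 = 0) :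
    ∀ t, y t = 0 := by
  set F : ℝ → ℝ := fun t => ∫ s in (0:ℝ)..t, c s with hF
  have hFderiv : ∀ t, HasDerivAt F (c t) t := by
    intro t
    exact intervalIntegral.integral_hasDerivAt_right
      (hc.intervalIntegrable 0 t) (hc.stronglyMeasurableAtFilter _ _)
      hc.continuousAt
  set g : ℝ → ℝ := fun t => y t * Real.exp (F t) with hg
  have hgderiv : ∀ t, HasDerivAt g 0 t := by
    intro t
    have h := (hy t).mul ((hFderiv t).exp)
    have : -(c t) * y t * Real.exp (F t) + y t * (Real.exp (F t) * c t) = 0 := by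
      ring
    rwa [this] at h
  have hgconst : ∀ t, g t = g 0 := by
    intro t
    have : ∀ s, deriv g s = 0 := fun s => (hgderiv s).deriv
    have hdiff : Differentiable ℝ g := fun s => (hgderiv s).differentiableAt
    exact is_const_of_deriv_eq_zero hdiff this t 0
  intro t
  have := hgconst t
  simp only [hg, h0, zero_mul] at this
  exact (mul_eq_zero.mp this).resolve_right (Real.exp_ne_zero (F t))

/-- The planes x₃ = x₁ and x₃ = −x₁ are invariant for the Rabinovich system
ẋ₁ = x₂x₃, ẋ₂ = −x₁x₃, ẋ₃ = x₁x₂. -/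
theorem rabinovich_invariant_planes (x₁ x₂ x₃ : ℝ → ℝ)
    (hx₁ : ∀ t, HasDerivAt x₁ (x₂ t * x₃ t) t)
    (hx₂ : ∀ t, HasDerivAt x₂ (-(x₁ t * x₃ t)) t)
    (hx₃ : ∀ t, HasDerivAt x₃ (x₁ t * x₂ t) t) :
    (x₃ 0 = x₁ 0 → ∀ t : ℝ, x₃ t = x₁ t) ∧
    (x₃ 0 = -x₁ 0 → ∀ t : ℝ, x₃ t = -x₁ t) := by
  have hc : Continuous x₂ := Differentiable.continuous (fun t => (hx₂ t).differentiableAt)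
  constructor
  · intro h0 t
    have key := linear_ode_zero (fun t => x₃ t - x₁ t) x₂ hc
      (fun t => by
        have := (hx₃ t).sub (hx₁ t)
        have heq : x₁ t * x₂ t - x₂ t * x₃ t = -(x₂ t) * (x₃ t - x₁ t) := by ring
        rwa [heq] at this)
      (by simp [h0])
    have : x₃ t - x₁ t = 0 := key t
    linarith
  · intro h0 t
    have key := linear_ode_zero (fun t => x₃ t + x₁ t) (fun t => -(x₂ t))
      hc.neg
      (fun t => by
        have := (hx₃ t).add (hx₁ t)
        have heq : x₁ t * x₂ t + x₂ t * x₃ t = -(-(x₂ t)) * (x₃ t + x₁ t) := by ring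
        rwa [heq] at this)
      (by simp [h0])
    have : x₃ t + x₁ t = 0 := key t
    linarith
end
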